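/- arXiv:math/0107220 — 3 statements merged into one kernel-verified Lean document; each statement's English description precedes it below -/
import Mathlib

section
/- Let W(t) be a Hermitian matrix with entries Laurent polynomials over ℂ (i.e., W(t̄⁻¹)* = W(t) for |t|=1 means W(z) is a Hermitian complex matrix for each z on the unit circle). Let T^(p) be the p×p cyclic permutation matrix. Then the signature of the Hermitian matrix W(T^(p)) (obtained by substituting T^(p) for t, using that T^(p) is normal with unitary diagonalization) equals the sum over all p-th roots of unity ω of the signature of W(ω). -/
open Matrix Polynomial Finset
open scoped Kronecker

/-- The signature (number of positive minus number of negative eigenvalues, with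
multiplicity) of a Hermitian complex matrix; junk value 0 on non-Hermitian matrices. -/
noncomputable def sig {m : Type*} [Fintype m] [DecidableEq m] (A : Matrix m m ℂ) : ℤ :=
  if hA : A.IsHermitian then
    ((Finset.univ.filter fun i => 0 < hA.eigenvalues i).card : ℤ) -
      ((Finset.univ.filter fun i => hA.eigenvalues i < 0).card : ℤ)
  else 0

/-- The p×p cyclic permutation matrix. -/
def cyclicMatrix (p : ℕ) : Matrix (Fin p) (Fin p) ℂ :=
  fun i j => if (j : ℕ) = ((i : ℕ) + 1) % p then 1 else 0

/-! ### Auxiliary signature-via-roots machinery -/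

/-- The "signature" of a multiset of complex numbers: number with positive real part minus
number with negative real part. -/
noncomputable def msig (s : Multiset ℂ) : ℤ :=
  ((s.filter fun z => 0 < z.re).card : ℤ) - ((s.filter fun z => z.re < 0).card : ℤ)

lemma msig_add (s t : Multiset ℂ) : msig (s + t) = msig s + msig t := by
  simp [msig, Multiset.filter_add]; ring

noncomputable def msigHom : Multiset ℂ →+ ℤ where
  toFun := msig
  map_zero' := by simp [msig]
  map_add' := msig_add

section aux

variable {m : Type*} [Fintype m] [DecidableEq m]

lemma charpoly_conj_units (U V A : Matrix m m ℂ) (h : U * V = 1) :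
    (U * A * V).charpoly = A.charpoly := by
  have h' : V * U = 1 := mul_eq_one_comm.mp h
  have hX : (diagonal fun _ : m => (X : ℂ[X])) = (X : ℂ[X]) • (1 : Matrix m m ℂ[X]) := by
    ext i j; by_cases hij : i = j <;> simp [hij, Matrix.one_apply]
  have hmat : charmatrix (U * A * V)
      = U.map C * charmatrix A * V.map C := by
    simp only [charmatrix, RingHom.mapMatrix_apply]
    rw [Matrix.mul_sub, Matrix.sub_mul]
    congr 1
    · rw [scalar_apply, hX, Matrix.mul_smul, Matrix.smul_mul, Matrix.mul_one, ← Matrix.map_mul, h,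
        Matrix.map_one C (map_zero C) (map_one C)]
    · simp [Matrix.map_mul]
  unfold Matrix.charpoly
  rw [hmat, det_mul, det_mul, mul_comm, ← mul_assoc, ← det_mul, ← Matrix.map_mul, h',
    Matrix.map_one C (map_zero C) (map_one C), det_one, one_mul]

lemma charpoly_diagonal (d : m → ℂ) :
    (diagonal d).charpoly = ∏ i, (X - C (d i)) := by
  unfold Matrix.charpoly
  have : charmatrix (diagonal d) = diagonal fun i => X - C (d i) := by
    ext i j; by_cases hij : i = j <;> simp [hij, charmatrix_apply, diagonal_apply_ne]
  rw [this, det_diagonal]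

lemma charpoly_hermitian (A : Matrix m m ℂ) (hA : A.IsHermitian) :
    A.charpoly = ∏ i, (X - C ((hA.eigenvalues i : ℝ) : ℂ)) := by
  conv_lhs => rw [hA.spectral_theorem]
  rw [Unitary.conjStarAlgAut_apply, charpoly_conj_units _ _ _ (Matrix.mem_unitaryGroup_iff.mp (hA.eigenvectorUnitary).2),
    _root_.charpoly_diagonal]
  rfl

lemma roots_charpoly_hermitian (A : Matrix m m ℂ) (hA : A.IsHermitian) :
    A.charpoly.roots = Finset.univ.val.map fun i => ((hA.eigenvalues i : ℝ) : ℂ) := by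
  rw [charpoly_hermitian A hA]
  have := roots_multiset_prod_X_sub_C (Finset.univ.val.map fun i => ((hA.eigenvalues i : ℝ) : ℂ))
  rw [← this]; congr 1
  rw [Multiset.map_map]
  rfl

lemma sig_eq_msig (A : Matrix m m ℂ) (hA : A.IsHermitian) : sig A = msig A.charpoly.roots := by
  rw [sig, dif_pos hA, roots_charpoly_hermitian A hA, msig]
  have h1 : ∀ (q : ℝ → Prop) [DecidablePred q],
      ((Multiset.filter (fun z : ℂ => q z.re)
        (Finset.univ.val.map fun i => ((hA.eigenvalues i : ℝ) : ℂ))).card)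
      = (Finset.univ.filter fun i => q (hA.eigenvalues i)).card := by
    intro q _
    rw [← Multiset.countP_eq_card_filter, Multiset.countP_map, ← Multiset.countP_eq_card_filter]
    have h2 : (Finset.univ.filter fun i => q (hA.eigenvalues i)).card
        = Multiset.countP (fun i => q (hA.eigenvalues i)) Finset.univ.val := by
      rw [Multiset.countP_eq_card_filter]; rfl
    rw [h2]
    exact Multiset.countP_congr rfl fun x _ => by simp [Function.comp]
  rw [h1 (fun x => 0 < x), h1 (fun x => x < 0)]

lemma charmatrix_blockDiagonal {o : Type*} [Fintype o] [DecidableEq o]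
    (M : o → Matrix m m ℂ) :
    charmatrix (blockDiagonal M) = blockDiagonal (fun k => charmatrix (M k)) := by
  ext ⟨i, a⟩ ⟨j, b⟩
  by_cases hab : a = b
  · subst hab
    by_cases hij : i = j <;>
      simp [hij, charmatrix_apply, blockDiagonal_apply, diagonal_apply, Prod.ext_iff]
  · simp [charmatrix_apply, blockDiagonal_apply, hab, diagonal_apply, Prod.ext_iff]

lemma charpoly_blockDiagonal {o : Type*} [Fintype o] [DecidableEq o]
    (M : o → Matrix m m ℂ) :
    (blockDiagonal M).charpoly = ∏ k, (M k).charpoly := by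
  unfold Matrix.charpoly
  rw [charmatrix_blockDiagonal, det_blockDiagonal]

lemma roots_prod_eq {o : Type*} [Fintype o] [DecidableEq o] (f : o → Polynomial ℂ)
    (hf : ∀ k, f k ≠ 0) :
    (∏ k, f k).roots = ∑ k, (f k).roots := by
  rw [Polynomial.roots_prod _ _ (by simp [Finset.prod_ne_zero_iff, hf])]
  rfl

lemma cyclicMatrix_pow (p : ℕ) (hp : 0 < p) (e : ℕ) (i j : Fin p) :
    (cyclicMatrix p ^ e) i j = if (j : ℕ) = ((i : ℕ) + e) % p then 1 else 0 := by
  induction e generalizing j with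
  | zero => simp [Matrix.one_apply, Nat.mod_eq_of_lt i.isLt, eq_comm, Fin.ext_iff]
  | succ e ih =>
    rw [pow_succ, Matrix.mul_apply]
    rw [Finset.sum_eq_single (⟨((i : ℕ) + e) % p, Nat.mod_lt _ hp⟩ : Fin p)]
    · simp [ih, cyclicMatrix, Nat.mod_add_mod, ← Nat.add_assoc]
    · intro b _ hb
      rw [ih, if_neg, zero_mul]
      intro h
      exact hb (Fin.ext h)
    · intro h; exact absurd (Finset.mem_univ _) h

lemma rootsum (p : ℕ) (hp : 0 < p) (ω : ℂ) (hω : IsPrimitiveRoot ω p) (t : ℤ) :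
    ∑ k : Fin p, ω ^ ((k : ℤ) * t) = if (p : ℤ) ∣ t then (p : ℂ) else 0 := by
  have hω0 : ω ≠ 0 := hω.ne_zero hp.ne'
  have hterm : ∀ k : Fin p, ω ^ ((k : ℤ) * t) = (ω ^ t) ^ (k : ℕ) := by
    intro k
    rw [mul_comm ((k : ℤ)) t, _root_.zpow_mul, zpow_natCast]
  simp only [hterm]
  rw [Fin.sum_univ_eq_sum_range (fun k => (ω ^ t) ^ k)]
  by_cases hd : (p : ℤ) ∣ t
  · rw [if_pos hd, (hω.zpow_eq_one_iff_dvd t).mpr hd]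
    simp
  · rw [if_neg hd]
    have hne : ω ^ t ≠ 1 := fun h => hd ((hω.zpow_eq_one_iff_dvd t).mp h)
    have hgeom := geom_sum_mul (ω ^ t) p
    have hzp : (ω ^ t) ^ p = 1 := by
      rw [← zpow_natCast, ← _root_.zpow_mul, mul_comm, _root_.zpow_mul, zpow_natCast,
        hω.pow_eq_one, _root_.one_zpow]
    rw [hzp, sub_self] at hgeom
    rcases mul_eq_zero.mp hgeom with h | h
    · exact h
    · exact absurd (sub_eq_zero.mp h) hne

lemma conjTranspose_kron {l o : Type*} (A : Matrix m m ℂ) (B : Matrix l o ℂ) :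
    (A ⊗ₖ B)ᴴ = Aᴴ ⊗ₖ Bᴴ := by
  ext ⟨a, i⟩ ⟨b, j⟩
  simp [conjTranspose_apply, kroneckerMap_apply]

end aux

theorem stmt_5 (n p N : ℕ) (hp : 1 ≤ p)
    (A : ℤ → Matrix (Fin n) (Fin n) ℂ)
    (hsupp : ∀ k : ℤ, (N : ℤ) < |k| → A k = 0)
    (hherm : ∀ k : ℤ, A (-k) = (A k)ᴴ)
    (W : ℂ → Matrix (Fin n) (Fin n) ℂ)
    (hW : ∀ z : ℂ, W z = ∑ k ∈ Finset.Icc (-(N : ℤ)) (N : ℤ), z ^ k • A k)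
    (hinv : ∀ ω : ℂ, ω ^ p = 1 → IsUnit (W ω).det) :
    sig (∑ k ∈ Finset.Icc (-(N : ℤ)) (N : ℤ),
        A k ⊗ₖ (cyclicMatrix p ^ (k % (p : ℤ)).toNat)) =
      ∑ ω ∈ Polynomial.nthRootsFinset p (1 : ℂ), sig (W ω) := by
  have hpn : p ≠ 0 := Nat.one_le_iff_ne_zero.mp hp
  have hp0 : 0 < p := hp
  have hpC : (p : ℂ) ≠ 0 := Nat.cast_ne_zero.mpr hpn
  set ω : ℂ := Complex.exp (2 * Real.pi * Complex.I / p) with hωdef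
  have hω : IsPrimitiveRoot ω p := Complex.isPrimitiveRoot_exp p hpn
  have hω0 : ω ≠ 0 := hω.ne_zero hpn
  have hωp : ω ^ p = 1 := hω.pow_eq_one
  -- star of roots of unity
  have hstar : ∀ z : ℂ, z ^ p = 1 → (starRingEnd ℂ) z = z⁻¹ := by
    intro z hz
    exact (Complex.inv_eq_conj (Complex.norm_eq_one_of_pow_eq_one hz hpn)).symm
  -- zpow depends only on exponent mod p
  have hzmod : ∀ x y : ℤ, (p : ℤ) ∣ (x - y) → ω ^ x = ω ^ y := by
    rintro x y ⟨t, ht⟩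
    have hx : x = y + (p : ℤ) * t := by linarith
    rw [hx, zpow_add₀ hω0, _root_.zpow_mul, zpow_natCast, hωp, _root_.one_zpow, mul_one]
  -- W z is Hermitian for all p-th roots of unity z
  have hWh : ∀ z : ℂ, z ^ p = 1 → (W z).IsHermitian := by
    intro z hz
    have hz0 : z ≠ 0 := by
      intro h; rw [h, zero_pow hpn] at hz; exact zero_ne_one hz
    show (W z)ᴴ = W z
    rw [hW, Matrix.conjTranspose_sum]
    have hterm : ∀ k ∈ Finset.Icc (-(N : ℤ)) (N : ℤ),
        (z ^ k • A k)ᴴ = z ^ (-k) • A (-k) := by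
      intro k _
      rw [Matrix.conjTranspose_smul, hherm k]
      congr 1
      rw [RCLike.star_def, map_zpow₀, hstar z hz, _root_.inv_zpow, ← _root_.zpow_neg]
    rw [Finset.sum_congr rfl hterm]
    exact Finset.sum_equiv (Equiv.neg ℤ)
      (by intro k; simp only [Finset.mem_Icc, Equiv.neg_apply]; omega)
      (by intro k _; simp)
  -- Fourier matrix
  set F : Matrix (Fin p) (Fin p) ℂ := fun i j => ω ^ ((i : ℕ) * (j : ℕ)) with hFdef
  have hFentry : ∀ i j : Fin p, F i j = ω ^ ((i : ℕ) * (j : ℕ)) := fun _ _ => rfl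
  have hFF : F * Fᴴ = (p : ℂ) • (1 : Matrix (Fin p) (Fin p) ℂ) := by
    ext i j
    rw [Matrix.mul_apply]
    have hterm : ∀ k : Fin p, F i k * (Fᴴ) k j = ω ^ ((k : ℤ) * ((i : ℤ) - (j : ℤ))) := by
      intro k
      rw [conjTranspose_apply, hFentry, hFentry, RCLike.star_def, map_pow, hstar ω hωp,
        inv_pow, ← zpow_natCast ω ((i : ℕ) * (k : ℕ)), ← zpow_natCast ω ((j : ℕ) * (k : ℕ)),
        ← _root_.zpow_neg, ← zpow_add₀ hω0]
      congr 1
      push_cast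
      ring
    rw [Finset.sum_congr rfl fun k _ => hterm k, rootsum p hp0 ω hω ((i : ℤ) - (j : ℤ))]
    have hdv : ((p : ℤ) ∣ ((i : ℤ) - (j : ℤ))) ↔ i = j := by
      rw [← Nat.modEq_iff_dvd]
      unfold Nat.ModEq
      rw [Nat.mod_eq_of_lt i.isLt, Nat.mod_eq_of_lt j.isLt]
      exact ⟨fun h => (Fin.ext h).symm, fun h => by rw [h]⟩
    by_cases hij : i = j
    · rw [if_pos (hdv.mpr hij), hij, Matrix.smul_apply, Matrix.one_apply_eq, smul_eq_mul, mul_one]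
    · rw [if_neg (fun h => hij (hdv.mp h)), Matrix.smul_apply, Matrix.one_apply_ne hij,
        smul_eq_mul, mul_zero]
  set U : Matrix (Fin n × Fin p) (Fin n × Fin p) ℂ :=
    (1 : Matrix (Fin n) (Fin n) ℂ) ⊗ₖ F with hUdef
  set Ui : Matrix (Fin n × Fin p) (Fin n × Fin p) ℂ :=
    (p : ℂ)⁻¹ • ((1 : Matrix (Fin n) (Fin n) ℂ) ⊗ₖ Fᴴ) with hUidef
  have hUU : U * Ui = 1 := by
    rw [hUdef, hUidef, Matrix.mul_smul, ← mul_kronecker_mul, Matrix.mul_one, hFF,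
      kronecker_smul, one_kronecker_one, smul_smul, inv_mul_cancel₀ hpC, one_smul]
  have hUiU : Ui * U = 1 := mul_eq_one_comm.mp hUU
  set B : Matrix (Fin n × Fin p) (Fin n × Fin p) ℂ :=
    blockDiagonal (fun i : Fin p => W (ω ^ (i : ℕ))) with hBdef
  set M : Matrix (Fin n × Fin p) (Fin n × Fin p) ℂ :=
    ∑ k ∈ Finset.Icc (-(N : ℤ)) (N : ℤ),
      A k ⊗ₖ (cyclicMatrix p ^ (k % (p : ℤ)).toNat) with hMdef
  -- the key intertwining identity
  have hMU : M * U = U * B := by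
    ext ⟨a, i⟩ ⟨c, k⟩
    rw [Matrix.mul_apply, Matrix.mul_apply]
    -- right side
    have hR : ∑ x : Fin n × Fin p, U (a, i) x * B x (c, k)
        = ω ^ ((i : ℕ) * (k : ℕ)) * (W (ω ^ (k : ℕ))) a c := by
      rw [Fintype.sum_prod_type]
      rw [Finset.sum_eq_single a ?_ ?_]
      · rw [Finset.sum_eq_single k ?_ ?_]
        · simp [hUdef, hBdef, blockDiagonal_apply, Matrix.one_apply, hFentry]
        · intro j _ hj; simp [hBdef, blockDiagonal_apply, hj]
        · simp
      · intro b _ hb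
        simp [hUdef, Matrix.one_apply, Ne.symm hb]
      · simp
    -- left side
    have hL : ∑ x : Fin n × Fin p, M (a, i) x * U x (c, k)
        = ∑ m ∈ Finset.Icc (-(N : ℤ)) (N : ℤ),
            A m a c * ω ^ (((((i : ℕ) + (m % (p : ℤ)).toNat) % p) * (k : ℕ) : ℕ)) := by
      rw [Fintype.sum_prod_type]
      rw [Finset.sum_eq_single c ?_ ?_]
      · have hM1 : ∀ y : Fin p, M (a, i) (c, y) = ∑ m ∈ Finset.Icc (-(N : ℤ)) (N : ℤ),
            A m a c * (if (y : ℕ) = ((i : ℕ) + (m % (p : ℤ)).toNat) % p then 1 else 0) := by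
          intro y
          rw [hMdef, Matrix.sum_apply]
          refine Finset.sum_congr rfl fun m _ => ?_
          rw [kroneckerMap_apply, cyclicMatrix_pow p hp0]
        simp only [hM1, hUdef, kroneckerMap_apply, Matrix.one_apply_eq, one_mul,
          Finset.sum_mul]
        rw [Finset.sum_comm]
        refine Finset.sum_congr rfl fun m _ => ?_
        rw [Finset.sum_eq_single
            (⟨((i : ℕ) + (m % (p : ℤ)).toNat) % p, Nat.mod_lt _ hp0⟩ : Fin p)]
        · simp [hFentry]
        · intro y _ hy
          rw [if_neg (fun h => hy (Fin.ext h))]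
          ring
        · simp
      · intro b _ hb
        refine Finset.sum_eq_zero fun y _ => ?_
        simp [hUdef, Matrix.one_apply, hb]
      · simp
    rw [hL, hR, hW, Matrix.sum_apply, Finset.mul_sum]
    refine Finset.sum_congr rfl fun m hm => ?_
    have he : (((m % (p : ℤ)).toNat : ℤ)) = m % (p : ℤ) :=
      Int.toNat_of_nonneg (Int.emod_nonneg m (by exact_mod_cast hpn))
    set e : ℕ := (m % (p : ℤ)).toNat with hedef
    have hsc : ω ^ (((((i : ℕ) + e) % p) * (k : ℕ) : ℕ))
        = ω ^ (((i : ℕ) * (k : ℕ) : ℕ)) * ((ω ^ ((k : ℕ)) : ℂ)) ^ m := by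
      rw [← zpow_natCast ω ((((i : ℕ) + e) % p) * (k : ℕ)),
        ← zpow_natCast ω ((i : ℕ) * (k : ℕ)), ← zpow_natCast ω (k : ℕ),
        ← _root_.zpow_mul, ← zpow_add₀ hω0]
      apply hzmod
      have hcast2 : ((((i : ℕ) + e) % p * (k : ℕ) : ℕ) : ℤ)
          = ((((i : ℕ) : ℤ) + (e : ℤ)) % (p : ℤ)) * ((k : ℕ) : ℤ) := by
        push_cast [Int.natCast_mod]; ring
      have hcast3 : (((i : ℕ) * (k : ℕ) : ℕ) : ℤ) = ((i : ℕ) : ℤ) * ((k : ℕ) : ℤ) := by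
        push_cast; ring
      rw [hcast2, hcast3]
      have d1 : (p : ℤ) ∣ ((((i : ℕ) : ℤ) + (e : ℤ)) % (p : ℤ)) - (((i : ℕ) : ℤ) + (e : ℤ)) :=
        ⟨-((((i : ℕ) : ℤ) + (e : ℤ)) / p), by rw [Int.emod_def]; ring⟩
      have d2 : (p : ℤ) ∣ (e : ℤ) - m := by
        rw [he]
        exact ⟨-(m / p), by rw [Int.emod_def]; ring⟩
      have hlin : (((((i : ℕ) : ℤ) + (e : ℤ)) % (p : ℤ)) * (k : ℕ))
          - (((i : ℕ) : ℤ) * ((k : ℕ) : ℤ) + ((k : ℕ) : ℤ) * m)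
          = ((((((i : ℕ) : ℤ) + (e : ℤ)) % (p : ℤ)) - (((i : ℕ) : ℤ) + (e : ℤ)))
              + ((e : ℤ) - m)) * ((k : ℕ) : ℤ) := by ring
      rw [hlin]
      exact (d1.add d2).mul_right _
    rw [hsc, Matrix.smul_apply, smul_eq_mul]
    ring
  have hM : M = U * B * Ui := by
    calc M = M * (U * Ui) := by rw [hUU, Matrix.mul_one]
    _ = (M * U) * Ui := by rw [Matrix.mul_assoc]
    _ = U * B * Ui := by rw [hMU]
  have hroot : ∀ i : Fin p, (ω ^ (i : ℕ)) ^ p = 1 := by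
    intro i
    rw [← pow_mul, mul_comm, pow_mul, hωp, one_pow]
  have hBh : B.IsHermitian := by
    show Bᴴ = B
    rw [hBdef, blockDiagonal_conjTranspose]
    exact congrArg _ (funext fun i => hWh _ (hroot i))
  have hUH : Uᴴ = (p : ℂ) • Ui := by
    rw [hUdef, hUidef, conjTranspose_kron, conjTranspose_one, smul_smul,
      mul_inv_cancel₀ hpC, one_smul]
  have hUiH : Uiᴴ = (p : ℂ)⁻¹ • U := by
    rw [hUidef, Matrix.conjTranspose_smul, conjTranspose_kron, conjTranspose_one,
      conjTranspose_conjTranspose]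
    congr 1
    simp
  have hMh : M.IsHermitian := by
    show Mᴴ = M
    rw [hM, Matrix.conjTranspose_mul, Matrix.conjTranspose_mul, hUiH, hUH, hBh.eq]
    rw [Matrix.smul_mul, Matrix.mul_smul, Matrix.mul_smul, smul_smul,
      inv_mul_cancel₀ hpC, one_smul, Matrix.mul_assoc]
  have hcp : M.charpoly = ∏ i : Fin p, (W (ω ^ (i : ℕ))).charpoly := by
    rw [hM, charpoly_conj_units U Ui B hUU, hBdef, charpoly_blockDiagonal]
  have hrp := roots_prod_eq (fun i : Fin p => (W (ω ^ (i : ℕ))).charpoly)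
    (fun i => (Matrix.charpoly_monic _).ne_zero)
  rw [sig_eq_msig M hMh, hcp, hrp]
  have hms : msig (∑ i : Fin p, (W (ω ^ (i : ℕ))).charpoly.roots)
      = ∑ i : Fin p, msig ((W (ω ^ (i : ℕ))).charpoly.roots) := map_sum msigHom _ _
  rw [hms]
  have hsig : ∀ i : Fin p, msig ((W (ω ^ (i : ℕ))).charpoly.roots) = sig (W (ω ^ (i : ℕ))) :=
    fun i => (sig_eq_msig _ (hWh _ (hroot i))).symm
  rw [Finset.sum_congr rfl fun i _ => hsig i]
  haveI : NeZero p := ⟨hpn⟩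
  refine Finset.sum_bij (fun (i : Fin p) _ => ω ^ (i : ℕ)) ?_ ?_ ?_ ?_
  · intro i _
    exact (Polynomial.mem_nthRootsFinset hp0 (1 : ℂ)).mpr (hroot i)
  · intro i _ j _ h
    exact Fin.ext (hω.pow_inj i.isLt j.isLt h)
  · intro ξ hξ
    obtain ⟨i, hi, hpow⟩ := hω.eq_pow_of_pow_eq_one ((Polynomial.mem_nthRootsFinset hp0 (1 : ℂ)).mp hξ)
    exact ⟨⟨i, hi⟩, Finset.mem_univ _, hpow⟩
  · intro i _
    rfl
end

section
/- With the notation of the clover presentation, for every t on the unit circle with t ≠ 1, the signature of W(t) equals the signature of the Hermitian matrix (1−t^{-1})A + (1−t)Aᵀ, where A is the Seifert matrix. -/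
open Matrix Finset

namespace SylAux

variable {n : Type*} [Fintype n] [DecidableEq n]

/-- quadratic form of a matrix -/
noncomputable def qf (B : Matrix n n ℂ) (x : n → ℂ) : ℝ := (star x ⬝ᵥ B *ᵥ x).re

/-- number of positive eigenvalues -/
noncomputable def posCount {B : Matrix n n ℂ} (hB : B.IsHermitian) : ℕ :=
  (Finset.univ.filter fun i => 0 < hB.eigenvalues i).card

/-- functions supported in a finset -/
noncomputable def suppSub (s : Finset n) : Submodule ℂ (n → ℂ) where
  carrier := {y | ∀ i ∉ s, y i = 0}
  add_mem' := by intro a b ha hb i hi; simp [ha i hi, hb i hi]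
  zero_mem' := by intro i hi; rfl
  smul_mem' := by intro c a ha i hi; simp [ha i hi]

noncomputable def suppEquiv (s : Finset n) : suppSub s ≃ₗ[ℂ] (s → ℂ) where
  toFun y i := y.1 i
  map_add' a b := rfl
  map_smul' c a := rfl
  invFun c := ⟨fun i => if h : i ∈ s then c ⟨i, h⟩ else 0, by intro i hi; simp [hi]⟩
  left_inv := by
    rintro ⟨y, hy⟩
    ext i
    by_cases h : i ∈ s <;> simp [h, hy i]
  right_inv := by
    intro c; ext i; simp

lemma finrank_suppSub (s : Finset n) : Module.finrank ℂ (suppSub s) = s.card := by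
  rw [(suppEquiv s).finrank_eq]
  simp [Module.finrank_fintype_fun_eq_card]

/-- linear equivalence from an invertible matrix -/
noncomputable def mveq (Q : Matrix n n ℂ) (hQ : IsUnit Q.det) : (n → ℂ) ≃ₗ[ℂ] (n → ℂ) :=
  LinearEquiv.ofLinear (mulVecLin Q) (mulVecLin Q⁻¹)
    (by rw [← mulVecLin_mul, Matrix.mul_nonsing_inv _ hQ, mulVecLin_one])
    (by rw [← mulVecLin_mul, Matrix.nonsing_inv_mul _ hQ, mulVecLin_one])

lemma qf_congr (B P : Matrix n n ℂ) (x : n → ℂ) :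
    qf (P * B * Pᴴ) x = qf B (Pᴴ *ᵥ x) := by
  unfold qf
  congr 1
  rw [← mulVec_mulVec, ← mulVec_mulVec, dotProduct_mulVec (star x) P]
  congr 1
  simp [star_mulVec, Matrix.star_eq_conjTranspose, conjTranspose_conjTranspose]

lemma qf_eq_sum {B : Matrix n n ℂ} (hB : B.IsHermitian) (x : n → ℂ) :
    qf B x = ∑ i, hB.eigenvalues i *
      Complex.normSq ((star (hB.eigenvectorUnitary : Matrix n n ℂ) *ᵥ x) i) := by
  set U := (hB.eigenvectorUnitary : Matrix n n ℂ) with hU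
  set y := star U *ᵥ x with hy
  have h1 : qf B x = (star y ⬝ᵥ (diagonal (RCLike.ofReal ∘ hB.eigenvalues) *ᵥ y)).re := by
    unfold qf
    conv_lhs => rw [hB.spectral_theorem, Unitary.conjStarAlgAut_apply]
    rw [← mulVec_mulVec, ← mulVec_mulVec, dotProduct_mulVec (star x) U]
    congr 2
    simp [hy, star_mulVec, Matrix.star_eq_conjTranspose, conjTranspose_conjTranspose]
  rw [h1, dotProduct]
  rw [Complex.re_sum]
  refine Finset.sum_congr rfl fun i _ => ?_
  rw [mulVec_diagonal]
  simp only [Pi.star_apply, Function.comp_apply, RCLike.ofReal_alg]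
  have : star (y i) * (hB.eigenvalues i • (1:ℂ) * y i)
      = ((hB.eigenvalues i * Complex.normSq (y i) : ℝ) : ℂ) := by
    simp only [Complex.real_smul, smul_eq_mul, mul_one, Complex.star_def, Complex.ofReal_mul,
      ← Complex.mul_conj]
    ring
  rw [this, Complex.ofReal_re]


lemma exists_pos_subspace {B : Matrix n n ℂ} (hB : B.IsHermitian) :
    ∃ V : Submodule ℂ (n → ℂ), Module.finrank ℂ V = posCount hB ∧
      ∀ x ∈ V, x ≠ 0 → 0 < qf B x := by
  set U := (hB.eigenvectorUnitary : Matrix n n ℂ) with hU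
  have hU1 : star U * U = 1 := Unitary.coe_star_mul_self _
  have hU2 : U * star U = 1 := Unitary.coe_mul_star_self _
  have hUdet : IsUnit U.det := IsUnit.of_mul_eq_one _ (by rw [← det_mul, hU2, det_one])
  set s := Finset.univ.filter fun i => 0 < hB.eigenvalues i with hs
  refine ⟨(suppSub s).map (mveq U hUdet).toLinearMap, ?_, ?_⟩
  · rw [LinearEquiv.finrank_map_eq]; exact finrank_suppSub s
  · rintro x hx hx0
    obtain ⟨y, hy, rfl⟩ := hx
    have hxy : (mveq U hUdet).toLinearMap y = U *ᵥ y := rfl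
    rw [hxy] at hx0 ⊢
    have hyx : star U *ᵥ (U *ᵥ y) = y := by
      rw [mulVec_mulVec, hU1, one_mulVec]
    rw [qf_eq_sum hB, ← hU, hyx]
    have hy0 : y ≠ 0 := by
      rintro rfl; exact hx0 (by simp)
    obtain ⟨j, hj⟩ := Function.ne_iff.mp hy0
    have hjs : j ∈ s := by
      by_contra hjs; exact hj (hy j hjs)
    refine Finset.sum_pos' (fun i _ => ?_) ⟨j, Finset.mem_univ j, ?_⟩
    · by_cases hi : i ∈ s
      · exact mul_nonneg (Finset.mem_filter.mp hi).2.le (Complex.normSq_nonneg _)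
      · rw [hy i hi]; simp
    · have h1 := (Finset.mem_filter.mp hjs).2
      have h2 : 0 < Complex.normSq (y j) := Complex.normSq_pos.mpr (by simpa using hj)
      positivity

lemma exists_nonpos_subspace {B : Matrix n n ℂ} (hB : B.IsHermitian) :
    ∃ V : Submodule ℂ (n → ℂ), Module.finrank ℂ V = Fintype.card n - posCount hB ∧
      ∀ x ∈ V, qf B x ≤ 0 := by
  set U := (hB.eigenvectorUnitary : Matrix n n ℂ) with hU
  have hU1 : star U * U = 1 := Unitary.coe_star_mul_self _
  have hU2 : U * star U = 1 := Unitary.coe_mul_star_self _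
  have hUdet : IsUnit U.det := IsUnit.of_mul_eq_one _ (by rw [← det_mul, hU2, det_one])
  set s := Finset.univ.filter fun i => 0 < hB.eigenvalues i with hs
  refine ⟨(suppSub sᶜ).map (mveq U hUdet).toLinearMap, ?_, ?_⟩
  · rw [LinearEquiv.finrank_map_eq, finrank_suppSub, Finset.card_compl]; rfl
  · rintro x hx
    obtain ⟨y, hy, rfl⟩ := hx
    have hxy : (mveq U hUdet).toLinearMap y = U *ᵥ y := rfl
    rw [hxy]
    have hyx : star U *ᵥ (U *ᵥ y) = y := by
      rw [mulVec_mulVec, hU1, one_mulVec]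
    rw [qf_eq_sum hB, ← hU, hyx]
    refine Finset.sum_nonpos fun i _ => ?_
    by_cases hi : i ∈ sᶜ
    · have h1 : ¬ (0 < hB.eigenvalues i) := by
        have := Finset.mem_compl.mp hi
        simpa [hs] using this
      exact mul_nonpos_iff.mpr (Or.inr ⟨le_of_not_gt h1, Complex.normSq_nonneg _⟩)
    · rw [hy i hi]; simp

lemma le_posCount {B : Matrix n n ℂ} (hB : B.IsHermitian) (V : Submodule ℂ (n → ℂ))
    (hV : ∀ x ∈ V, x ≠ 0 → 0 < qf B x) : Module.finrank ℂ V ≤ posCount hB := by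
  obtain ⟨Wm, hWrank, hWneg⟩ := exists_nonpos_subspace hB
  have hdisj : V ⊓ Wm = ⊥ := by
    rw [Submodule.eq_bot_iff]
    rintro x ⟨hx1, hx2⟩
    by_contra hx0
    exact absurd (hWneg x hx2) (not_le.mpr (hV x hx1 hx0))
  have hsum := Submodule.finrank_sup_add_finrank_inf_eq V Wm
  rw [hdisj] at hsum
  have hle : Module.finrank ℂ ↥(V ⊔ Wm) ≤ Fintype.card n := by
    have := Submodule.finrank_le (V ⊔ Wm)
    simpa [Module.finrank_fintype_fun_eq_card] using this
  have hposle : posCount hB ≤ Fintype.card n := by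
    unfold posCount
    exact le_trans (Finset.card_filter_le _ _) (by simp)
  simp only [finrank_bot, add_zero] at hsum
  omega

lemma posCount_le_congr {B P : Matrix n n ℂ} (hP : IsUnit P.det)
    (hB : B.IsHermitian) (hC : (P * B * Pᴴ).IsHermitian) :
    posCount hB ≤ posCount hC := by
  have hPH : IsUnit Pᴴ.det := by rw [det_conjTranspose]; exact hP.star
  obtain ⟨V, hVrank, hVpos⟩ := exists_pos_subspace hB
  set V' := V.map (mveq Pᴴ hPH).symm.toLinearMap with hV'
  have hV'rank : Module.finrank ℂ V' = posCount hB := by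
    rw [hV', LinearEquiv.finrank_map_eq]; exact hVrank
  rw [← hV'rank]
  refine le_posCount hC V' ?_
  rintro x hx hx0
  obtain ⟨y, hy, rfl⟩ := hx
  have key : Pᴴ *ᵥ ((mveq Pᴴ hPH).symm.toLinearMap y) = y := by
    have := (mveq Pᴴ hPH).apply_symm_apply y
    exact this
  rw [qf_congr, key]
  refine hVpos y hy ?_
  rintro rfl
  exact hx0 (by simp)

lemma posCount_matrix_congr {B B' : Matrix n n ℂ} (h : B = B')
    (hB : B.IsHermitian) (hB' : B'.IsHermitian) : posCount hB = posCount hB' := by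
  subst h; rfl

lemma posCount_congr {B P : Matrix n n ℂ} (hP : IsUnit P.det)
    (hB : B.IsHermitian) (hC : (P * B * Pᴴ).IsHermitian) :
    posCount hC = posCount hB := by
  refine le_antisymm ?_ (posCount_le_congr hP hB hC)
  have hPH : IsUnit Pᴴ.det := by rw [det_conjTranspose]; exact hP.star
  have hPinv : IsUnit (P⁻¹).det := by
    exact isUnit_nonsing_inv_det P hP
  have h2 : P⁻¹ * (P * B * Pᴴ) * (P⁻¹)ᴴ = B := by
    rw [conjTranspose_nonsing_inv]
    calc P⁻¹ * (P * B * Pᴴ) * (Pᴴ)⁻¹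
        = (P⁻¹ * P) * B * (Pᴴ * (Pᴴ)⁻¹) := by noncomm_ring
      _ = B := by rw [nonsing_inv_mul _ hP, mul_nonsing_inv _ hPH, one_mul, mul_one]
  have hB2 : (P⁻¹ * (P * B * Pᴴ) * (P⁻¹)ᴴ).IsHermitian := h2.symm ▸ hB
  have := posCount_le_congr hPinv hC hB2
  rwa [posCount_matrix_congr h2 hB2 hB] at this


lemma posCount_add_negCount {B : Matrix n n ℂ} (hB : B.IsHermitian) :
    posCount hB + (Finset.univ.filter fun i => hB.eigenvalues i < 0).card = B.rank := by
  rw [hB.rank_eq_card_non_zero_eigs, Fintype.card_subtype]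
  unfold posCount
  rw [← Finset.card_union_of_disjoint (by
    rw [Finset.disjoint_left]
    intro i h1 h2
    exact lt_asymm (Finset.mem_filter.mp h1).2 (Finset.mem_filter.mp h2).2)]
  congr 1
  ext i
  simp only [Finset.mem_union, Finset.mem_filter, Finset.mem_univ, true_and]
  constructor
  · rintro (h | h) <;> [exact ne_of_gt h; exact ne_of_lt h]
  · intro h
    rcases h.lt_or_gt with h | h
    · exact Or.inr h
    · exact Or.inl h

lemma sig_eq_posCount {B : Matrix n n ℂ} (hB : B.IsHermitian) :
    sig B = 2 * (posCount hB : ℤ) - (B.rank : ℤ) := by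
  have h := posCount_add_negCount hB
  rw [sig, dif_pos hB]
  unfold posCount at h ⊢
  omega

lemma sig_conj (B P : Matrix n n ℂ) (hP : IsUnit P.det) (hB : B.IsHermitian) :
    sig (P * B * Pᴴ) = sig B := by
  have hC : (P * B * Pᴴ).IsHermitian := isHermitian_mul_mul_conjTranspose P hB
  have hPH : IsUnit Pᴴ.det := by rw [det_conjTranspose]; exact hP.star
  have hrank : (P * B * Pᴴ).rank = B.rank := by
    rw [Matrix.mul_assoc, rank_mul_eq_right_of_isUnit_det P _ hP,
      rank_mul_eq_left_of_isUnit_det Pᴴ B hPH]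
  rw [sig_eq_posCount hC, sig_eq_posCount hB, posCount_congr hP hB hC, hrank]

end SylAux


theorem stmt_7 (g : ℕ) (hg : 1 ≤ g)
    (Lxx Lxy Lyx Lyy : Matrix (Fin g) (Fin g) ℝ)
    (hxx : Lxxᵀ = Lxx) (hyy : Lyyᵀ = Lyy) (hxy : Lxy = Lyxᵀ)
    (A : Matrix (Fin g ⊕ Fin g) (Fin g ⊕ Fin g) ℝ)
    (hA : A = Matrix.fromBlocks Lxx Lxy (Lyx - 1) Lyy)
    (t : ℂ) (ht : ‖t‖ = 1) (ht1 : t ≠ 1)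
    (W : Matrix (Fin g ⊕ Fin g) (Fin g ⊕ Fin g) ℂ)
    (hW : W = Matrix.fromBlocks
        ((Lxx.map (Complex.ofReal)))
        ((1 - t⁻¹) • (Lxy.map (Complex.ofReal)) - 1)
        ((1 - t) • (Lyx.map (Complex.ofReal)) - 1)
        ((2 - t - t⁻¹) • (Lyy.map (Complex.ofReal)))) :
    sig W =
      sig ((1 - t⁻¹) • (A.map Complex.ofReal) +
        (1 - t) • ((A.map Complex.ofReal)ᵀ)) := by
  have ht0 : t ≠ 0 := by rintro rfl; simp at ht
  have htinv : (starRingEnd ℂ) t = t⁻¹ := by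
    have h1 : t * (starRingEnd ℂ) t = 1 := by
      rw [Complex.mul_conj]
      norm_cast
      rw [← Complex.sq_norm, ht]; norm_num
    exact (inv_eq_of_mul_eq_one_right h1).symm
  have hconj1t : (starRingEnd ℂ) (1 - t) = 1 - t⁻¹ := by
    simp [map_sub, htinv]
  have ht1' : (1 : ℂ) - t ≠ 0 := sub_ne_zero.mpr (Ne.symm ht1)
  -- index fact lemmas
  have hxxE : ∀ i j, Lxx j i = Lxx i j := fun i j => congrFun (congrFun hxx i) j
  have hyyE : ∀ i j, Lyy j i = Lyy i j := fun i j => congrFun (congrFun hyy i) j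
  have hxyT : Lxyᵀ = Lyx := by rw [hxy, transpose_transpose]
  have hmapH : ∀ (M : Matrix (Fin g) (Fin g) ℝ),
      (M.map Complex.ofReal)ᴴ = Mᵀ.map Complex.ofReal := by
    intro M; ext i j
    simp [conjTranspose_apply, Matrix.map_apply, Complex.conj_ofReal]
  have hstA : star ((1:ℂ) - t) = 1 - t⁻¹ := by
    simp [Complex.star_def, map_sub, htinv]
  have hstB : star ((1:ℂ) - t⁻¹) = 1 - t := by
    simp [Complex.star_def, map_sub, map_inv₀, htinv, inv_inv]
  have hstC : star ((2:ℂ) - t - t⁻¹) = 2 - t - t⁻¹ := by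
    simp only [Complex.star_def, map_sub, map_inv₀, htinv, inv_inv, Complex.conj_ofNat]
    ring
  set P : Matrix (Fin g ⊕ Fin g) (Fin g ⊕ Fin g) ℂ :=
    Matrix.fromBlocks ((1 - t) • 1) 0 0 1 with hP
  have hPdet : IsUnit P.det := by
    rw [hP, det_fromBlocks_zero₂₁, det_one, mul_one, det_smul, det_one, mul_one]
    exact IsUnit.pow _ (Ne.isUnit ht1')
  have hPH : Pᴴ = Matrix.fromBlocks ((1 - t⁻¹) • (1 : Matrix (Fin g) (Fin g) ℂ)) 0 0 1 := by
    rw [hP, fromBlocks_conjTranspose]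
    refine fromBlocks_inj.mpr ⟨?_, by simp, by simp, by simp⟩
    rw [conjTranspose_smul, conjTranspose_one, hstA]
  have hWherm : W.IsHermitian := by
    show Wᴴ = W
    rw [hW, fromBlocks_conjTranspose]
    refine fromBlocks_inj.mpr ⟨?_, ?_, ?_, ?_⟩
    · rw [hmapH, hxx]
    · rw [conjTranspose_sub, conjTranspose_smul, conjTranspose_one, hmapH, hstA, ← hxy]
    · rw [conjTranspose_sub, conjTranspose_smul, conjTranspose_one, hmapH, hstB, hxyT]
    · rw [conjTranspose_smul, hmapH, hstC, hyy]
  -- expand A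
  have hAmap : A.map Complex.ofReal = Matrix.fromBlocks (Lxx.map Complex.ofReal)
      (Lxy.map Complex.ofReal) ((Lyx.map Complex.ofReal) - 1) (Lyy.map Complex.ofReal) := by
    rw [hA, fromBlocks_map]
    refine fromBlocks_inj.mpr ⟨rfl, rfl, ?_, rfl⟩
    ext i j
    simp [Matrix.map_apply, Matrix.sub_apply, Matrix.one_apply, apply_ite Complex.ofReal]
  have hAT : (A.map Complex.ofReal)ᵀ = Matrix.fromBlocks (Lxx.map Complex.ofReal)
      ((Lxy.map Complex.ofReal) - 1) (Lyx.map Complex.ofReal) (Lyy.map Complex.ofReal) := by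
    rw [hAmap, fromBlocks_transpose]
    refine fromBlocks_inj.mpr ⟨?_, ?_, ?_, ?_⟩
    · rw [← transpose_map, hxx]
    · rw [transpose_sub, transpose_one, ← transpose_map, ← hxy]
    · rw [← transpose_map, hxyT]
    · rw [← transpose_map, hyy]
  have hM : (1 - t⁻¹) • (A.map Complex.ofReal) + (1 - t) • ((A.map Complex.ofReal)ᵀ)
      = P * W * Pᴴ := by
    rw [hAT, hAmap, hPH, hP, hW]
    rw [fromBlocks_multiply, fromBlocks_multiply, fromBlocks_smul, fromBlocks_smul,
      fromBlocks_add]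
    refine fromBlocks_inj.mpr ⟨?_, ?_, ?_, ?_⟩ <;>
      · simp only [Matrix.zero_mul, Matrix.mul_zero, Matrix.mul_one, Matrix.one_mul,
          add_zero, zero_add, Matrix.smul_mul, Matrix.mul_smul, Matrix.sub_mul,
          Matrix.mul_sub, Matrix.one_mul, smul_smul, sub_smul, smul_sub]
        match_scalars <;> field_simp <;> ring
  rw [hM, SylAux.sig_conj W P hPdet hWherm]
end

section
/- Let W be a Hermitian matrix over the Laurent polynomial ring ℚ[t,t^{-1}] (with involution t ↦ t^{-1}) such that W(1) is invertible over ℤ. Define δ(W) = det(W) · det(W(1))^{-1}. Then δ is invariant under the moves W ↦ P*(W ⊕ E)P where E is a ±1 diagonal matrix and P is either an elementary matrix or a diagonal matrix with monomial entries t^{n_i}; i.e., δ(P*(W ⊕ E)P) = δ(W) up to multiplication by a unit ± t^k. -/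
open Matrix LaurentPolynomial

/-- `δ(W) = det(W) · det(W(1))⁻¹`, where `h` is evaluation at `t = 1`. -/
noncomputable def deltaInv {ι : Type*} [Fintype ι] [DecidableEq ι]
    (h : LaurentPolynomial ℚ →+* ℚ) (M : Matrix ι ι (LaurentPolynomial ℚ)) :
    LaurentPolynomial ℚ :=
  LaurentPolynomial.C ((h M.det)⁻¹) * M.det

/-- The conjugate-transpose with respect to the involution `t ↦ t⁻¹`. -/
noncomputable def lstar {ι : Type*} (M : Matrix ι ι (LaurentPolynomial ℚ)) :
    Matrix ι ι (LaurentPolynomial ℚ) :=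
  (M.map fun f => LaurentPolynomial.invert f)ᵀ

lemma lstar_det {ι : Type*} [Fintype ι] [DecidableEq ι]
    (M : Matrix ι ι (LaurentPolynomial ℚ)) :
    (lstar M).det = LaurentPolynomial.invert M.det := by
  rw [lstar, Matrix.det_transpose]
  exact ((invert : LaurentPolynomial ℚ ≃ₐ[ℚ] LaurentPolynomial ℚ).toAlgHom.toRingHom.map_det M).symm

theorem stmt_18 (n m : ℕ)
    (h : LaurentPolynomial ℚ →+* ℚ)
    (hC : ∀ a : ℚ, h (LaurentPolynomial.C a) = a)
    (hT : ∀ k : ℤ, h (LaurentPolynomial.T k) = 1)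
    (W : Matrix (Fin n) (Fin n) (LaurentPolynomial ℚ))
    (hherm : lstar W = W)
    (hW1 : h W.det = 1 ∨ h W.det = -1)
    (e : Fin m → LaurentPolynomial ℚ) (he : ∀ i, e i = 1 ∨ e i = -1)
    (P : Matrix (Fin n ⊕ Fin m) (Fin n ⊕ Fin m) (LaurentPolynomial ℚ))
    (hP : (∃ (i j : Fin n ⊕ Fin m) (c : LaurentPolynomial ℚ), i ≠ j ∧
            P = 1 + Matrix.single i j c) ∨
          (∃ d : Fin n ⊕ Fin m → ℤ,
            P = Matrix.diagonal fun i => LaurentPolynomial.T (d i))) :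
    ∃ (ε : ℚ) (k : ℤ), (ε = 1 ∨ ε = -1) ∧
      deltaInv h (lstar P * Matrix.fromBlocks W 0 0 (Matrix.diagonal e) * P) =
        LaurentPolynomial.C ε * LaurentPolynomial.T k * deltaInv h W := by
  have hPP : (lstar P).det * P.det = 1 := by
    rw [lstar_det]
    rcases hP with ⟨i, j, c, hij, rfl⟩ | ⟨d, rfl⟩
    · rw [show (1 : Matrix _ _ (LaurentPolynomial ℚ)) + Matrix.single i j c
          = Matrix.transvection i j c from rfl, Matrix.det_transvection_of_ne _ _ hij c]
      rw [_root_.map_one, one_mul]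
    · rw [Matrix.det_diagonal, map_prod, ← Finset.prod_mul_distrib]
      exact Finset.prod_eq_one fun i _ => by
        rw [invert_T, ← T_add, neg_add_cancel, T_zero]
  have hprod : (∏ i, e i) = 1 ∨ (∏ i, e i) = -1 := by
    refine Finset.prod_induction e (fun x => x = 1 ∨ x = -1) ?_ (Or.inl rfl) (fun i _ => he i)
    rintro a b (rfl | rfl) (rfl | rfl) <;> simp
  have hdet : (lstar P * Matrix.fromBlocks W 0 0 (Matrix.diagonal e) * P).det
      = (∏ i, e i) * W.det := by
    rw [Matrix.det_mul, Matrix.det_mul, Matrix.det_fromBlocks_zero₁₂, Matrix.det_diagonal]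
    linear_combination (W.det * ∏ i, e i) * hPP
  refine ⟨1, 0, Or.inl rfl, ?_⟩
  rcases hprod with hp | hp
  · simp [deltaInv, hdet, hp, hC, mul_comm]
  · simp only [deltaInv, hdet, hp, hC, map_neg, inv_neg, _root_.map_one, T_zero, mul_one, one_mul,
      neg_mul, mul_neg, neg_neg, C_eq_algebraMap]
end
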